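/- Let 0 < α < 2 and h > 0. Then the family of quadratic-interpolation weights is summable and Σ_{j∈ℤ, j≠0} w_j^Q = 2^α · Γ((α+1)/2) / (√π · Γ(2 − α/2)) · h^{−α}. -/

import Mathlib

open Real Filter Topology

/-- The normalizing constant `C_{1,α}` of the one-dimensional fractional Laplacian. -/
noncomputable def Cna (α : ℝ) : ℝ :=
  α * 2 ^ (α - 1) * Real.Gamma ((α + 1) / 2) / (Real.sqrt Real.pi * Real.Gamma ((2 - α) / 2))

/-- The antiderivative `G` with `G'''(t) = C_{1,α} t^{−1−α}` for `t > 0`. -/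
noncomputable def Gfun (α t : ℝ) : ℝ :=
  if α = 1 then Cna 1 * (t - t * Real.log t)
  else Cna α * t ^ (2 - α) / ((2 - α) * (α - 1) * α)

/-- The first derivative `G'` of `Gfun` (for `t > 0`). -/
noncomputable def Gd (α t : ℝ) : ℝ :=
  if α = 1 then -(Cna 1) * Real.log t else Cna α * t ^ (1 - α) / ((α - 1) * α)

/-- The second derivative `G''` of `Gfun`: `G''(t) = −C_{1,α} t^{−α}/α` for `t > 0`
(valid in both cases `α ≠ 1` and `α = 1`). -/
noncomputable def Gd2 (α t : ℝ) : ℝ := -(Cna α) * t ^ (-α) / α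

/-- The quadratic-interpolation weights `w_j^Q` (with the irrelevant `w_0` set to `0`). -/
noncomputable def wQ (α h : ℝ) (j : ℤ) : ℝ :=
  if j = 0 then 0
  else if j.natAbs = 1 then
    h ^ (-α) * (Cna α / (2 - α) - Gd2 α 1 - (Gd α 3 + 3 * Gd α 1) / 2 + Gfun α 3 - Gfun α 1)
  else if j.natAbs % 2 = 0 then
    2 * h ^ (-α) * (Gd α ((j.natAbs : ℝ) + 1) + Gd α ((j.natAbs : ℝ) - 1)
      - Gfun α ((j.natAbs : ℝ) + 1) + Gfun α ((j.natAbs : ℝ) - 1))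
  else
    h ^ (-α) * (-(Gd α ((j.natAbs : ℝ) + 2) + 6 * Gd α (j.natAbs : ℝ) + Gd α ((j.natAbs : ℝ) - 2)) / 2
      + Gfun α ((j.natAbs : ℝ) + 2) - Gfun α ((j.natAbs : ℝ) - 2))

lemma Cna_pos {α : ℝ} (hα0 : 0 < α) (hα2 : α < 2) : 0 < Cna α := by
  unfold Cna
  have h1 : 0 < Real.Gamma ((α + 1) / 2) := Real.Gamma_pos_of_pos (by linarith)
  have h2 : 0 < Real.Gamma ((2 - α) / 2) := Real.Gamma_pos_of_pos (by linarith)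
  have h3 : (0:ℝ) < 2 ^ (α - 1) := Real.rpow_pos_of_pos (by norm_num) _
  have h4 : 0 < Real.sqrt Real.pi := Real.sqrt_pos.2 Real.pi_pos
  positivity

lemma diff_bound {f f' : ℝ → ℝ} {a b M : ℝ} (hab : a ≤ b)
    (hderiv : ∀ t ∈ Set.Icc a b, HasDerivAt f (f' t) t)
    (hbound : ∀ t ∈ Set.Icc a b, |f' t| ≤ M) :
    |f b - f a| ≤ M * (b - a) := by
  have := Convex.norm_image_sub_le_of_norm_hasDerivWithin_le
    (f := f) (f' := f') (s := Set.Icc a b) (C := M)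
    (fun t ht => (hderiv t ht).hasDerivWithinAt) (fun t ht => hbound t ht)
    (convex_Icc a b) (Set.left_mem_Icc.2 hab) (Set.right_mem_Icc.2 hab)
  simpa [Real.norm_eq_abs, abs_of_nonneg (sub_nonneg.2 hab)] using this

lemma hasDerivAt_Gd2 {α : ℝ} (hα0 : 0 < α) {t : ℝ} (ht : 0 < t) :
    HasDerivAt (Gd2 α) (Cna α * t ^ (-1 - α)) t := by
  have h1 : HasDerivAt (fun t : ℝ => t ^ (-α)) (-α * t ^ (-α - 1)) t :=
    Real.hasDerivAt_rpow_const (Or.inl ht.ne')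
  have h2 := (h1.const_mul (-(Cna α))).div_const α
  have he : (-α - 1) = (-1 - α) := by ring
  refine h2.congr_deriv ?_
  rw [he]
  field_simp

lemma hasDerivAt_Gd {α : ℝ} (hα0 : 0 < α) (hα2 : α < 2) {t : ℝ} (ht : 0 < t) :
    HasDerivAt (Gd α) (Gd2 α t) t := by
  rcases eq_or_ne α 1 with rfl | hα1
  · have h1 : HasDerivAt (fun t : ℝ => -(Cna 1) * Real.log t) (-(Cna 1) * t⁻¹) t :=
      (Real.hasDerivAt_log ht.ne').const_mul _
    have : Gd 1 = fun t : ℝ => -(Cna 1) * Real.log t := by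
      funext s; simp [Gd]
    rw [this, Gd2]
    convert h1 using 1
    rw [Real.rpow_neg_one]
    ring
  · have h1 : HasDerivAt (fun t : ℝ => t ^ (1 - α)) ((1 - α) * t ^ (1 - α - 1)) t :=
      Real.hasDerivAt_rpow_const (Or.inl ht.ne')
    have h2 := (h1.const_mul (Cna α)).div_const ((α - 1) * α)
    have hG : Gd α = fun t : ℝ => Cna α * t ^ (1 - α) / ((α - 1) * α) := by
      funext s; simp [Gd, hα1]
    rw [hG, Gd2]
    refine h2.congr_deriv ?_
    have he : (1 - α - 1) = -α := by ring
    rw [he]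
    have hne : (α - 1) * α ≠ 0 := by
      have : α - 1 ≠ 0 := sub_ne_zero.2 hα1
      positivity
    field_simp
    ring

lemma hasDerivAt_Gfun {α : ℝ} (hα0 : 0 < α) (hα2 : α < 2) {t : ℝ} (ht : 0 < t) :
    HasDerivAt (Gfun α) (Gd α t) t := by
  rcases eq_or_ne α 1 with rfl | hα1
  · have hlog : HasDerivAt (fun t : ℝ => t * Real.log t) (1 * Real.log t + t * t⁻¹) t :=
      (hasDerivAt_id t).mul (Real.hasDerivAt_log ht.ne')
    have h1 : HasDerivAt (fun t : ℝ => Cna 1 * (t - t * Real.log t))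
        (Cna 1 * (1 - (1 * Real.log t + t * t⁻¹))) t :=
      (((hasDerivAt_id t).sub hlog)).const_mul _
    have hG : Gfun 1 = fun t : ℝ => Cna 1 * (t - t * Real.log t) := by
      funext s; simp [Gfun]
    rw [hG, Gd]
    simp only [if_pos rfl, if_true]
    convert h1 using 1
    rw [mul_inv_cancel₀ ht.ne']
    ring
  · have h1 : HasDerivAt (fun t : ℝ => t ^ (2 - α)) ((2 - α) * t ^ (2 - α - 1)) t :=
      Real.hasDerivAt_rpow_const (Or.inl ht.ne')
    have h2 := (h1.const_mul (Cna α)).div_const ((2 - α) * (α - 1) * α)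
    have hG : Gfun α = fun t : ℝ => Cna α * t ^ (2 - α) / ((2 - α) * (α - 1) * α) := by
      funext s; simp [Gfun, hα1]
    rw [hG, Gd]
    simp only [if_neg hα1]
    refine h2.congr_deriv ?_
    have he : (2 - α - 1) = 1 - α := by ring
    rw [he]
    have h2α : (2 - α) ≠ 0 := by linarith
    have hα1' : α - 1 ≠ 0 := sub_ne_zero.2 hα1
    field_simp

/-- bound on the third derivative on `[a, ∞)` -/
lemma G3_bound {α a t : ℝ} (hα0 : 0 < α) (hα2 : α < 2) (ha : 0 < a) (hat : a ≤ t) :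
    |Cna α * t ^ (-1 - α)| ≤ Cna α * a ^ (-1 - α) := by
  have hc := Cna_pos hα0 hα2
  have ht : 0 < t := lt_of_lt_of_le ha hat
  rw [abs_of_nonneg (by positivity)]
  exact mul_le_mul_of_nonneg_left
    (Real.rpow_le_rpow_of_nonpos ha hat (by linarith)) hc.le

/-- bound on the second derivative on `[a, ∞)` -/
lemma Gd2_bound {α a t : ℝ} (hα0 : 0 < α) (hα2 : α < 2) (ha : 0 < a) (hat : a ≤ t) :
    |Gd2 α t| ≤ Cna α * a ^ (-α) / α := by
  have hc := Cna_pos hα0 hα2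
  have ht : 0 < t := lt_of_lt_of_le ha hat
  have : |Gd2 α t| = Cna α * t ^ (-α) / α := by
    have hnn : (0:ℝ) ≤ Cna α * t ^ (-α) := by positivity
    rw [Gd2, abs_div, abs_of_pos hα0, abs_of_nonpos (by linarith : -(Cna α) * t ^ (-α) ≤ 0)]
    ring
  rw [this]
  have := Real.rpow_le_rpow_of_nonpos ha hat (by linarith : -α ≤ 0)
  have h2 : Cna α * t ^ (-α) ≤ Cna α * a ^ (-α) := mul_le_mul_of_nonneg_left this hc.le
  exact div_le_div_of_nonneg_right h2 hα0.le |>.trans_eq rfl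

lemma Gd2_diff {α a p q : ℝ} (hα0 : 0 < α) (hα2 : α < 2) (ha : 0 < a) (hap : a ≤ p)
    (hpq : p ≤ q) : |Gd2 α q - Gd2 α p| ≤ Cna α * a ^ (-1 - α) * (q - p) := by
  refine diff_bound hpq (fun t ht => hasDerivAt_Gd2 hα0 (by linarith [ht.1])) ?_
  exact fun t ht => G3_bound hα0 hα2 ha (le_trans hap ht.1)

lemma Gd_diff {α a p q : ℝ} (hα0 : 0 < α) (hα2 : α < 2) (ha : 0 < a) (hap : a ≤ p)
    (hpq : p ≤ q) : |Gd α q - Gd α p| ≤ (Cna α * a ^ (-α) / α) * (q - p) := by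
  refine diff_bound hpq (fun t ht => hasDerivAt_Gd hα0 hα2 (by linarith [ht.1])) ?_
  exact fun t ht => Gd2_bound hα0 hα2 ha (le_trans hap ht.1)

lemma hasDerivAt_affine_comp {g g' : ℝ → ℝ} {x k s : ℝ} (hg : HasDerivAt g (g' (x + k * s)) (x + k * s)) :
    HasDerivAt (fun s : ℝ => g (x + k * s)) (g' (x + k * s) * k) s := by
  have haff : HasDerivAt (fun s : ℝ => x + k * s) k s := by
    simpa using ((hasDerivAt_id s).const_mul k).const_add x
  exact hg.comp s haff

/-- second-difference bound for `Gd` -/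
lemma Gd_sdiff {α a x u : ℝ} (hα0 : 0 < α) (hα2 : α < 2) (ha : 0 < a) (hu : 0 ≤ u)
    (hax : a ≤ x - u) :
    |Gd α (x + u) + Gd α (x - u) - 2 * Gd α x| ≤ 2 * Cna α * a ^ (-1 - α) * u ^ 2 := by
  have hc := Cna_pos hα0 hα2
  set χ : ℝ → ℝ := fun v => Gd α (x + v) + Gd α (x - v) - 2 * Gd α x with hχ
  have key : |χ u - χ 0| ≤ (2 * Cna α * a ^ (-1 - α) * u) * (u - 0) := by
    refine diff_bound hu (f' := fun v => Gd2 α (x + v) - Gd2 α (x - v)) ?_ ?_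
    · intro v hv
      have h1 : 0 < x + v := by nlinarith [hv.1, hv.2]
      have h2 : 0 < x - v := by nlinarith [hv.2]
      have d1 : HasDerivAt (fun v : ℝ => Gd α (x + 1 * v)) (Gd2 α (x + 1 * v) * 1) v :=
        hasDerivAt_affine_comp (g' := Gd2 α) (hasDerivAt_Gd hα0 hα2 (by linarith))
      have d2 : HasDerivAt (fun v : ℝ => Gd α (x + (-1) * v)) (Gd2 α (x + (-1) * v) * (-1)) v :=
        hasDerivAt_affine_comp (g' := Gd2 α) (hasDerivAt_Gd hα0 hα2 (by linarith))
      have := (d1.add d2).sub_const (2 * Gd α x)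
      simp only [one_mul, neg_one_mul, mul_one, mul_neg] at this ⊢
      simp only [sub_eq_add_neg] at this ⊢
      exact this.congr_deriv (by ring)
    · intro v hv
      have h1 : a ≤ x - v := by linarith [hv.2]
      have := Gd2_diff hα0 hα2 ha h1 (by linarith [hv.1] : x - v ≤ x + v)
      calc |Gd2 α (x + v) - Gd2 α (x - v)| ≤ Cna α * a ^ (-1 - α) * ((x+v) - (x-v)) := this
        _ = 2 * Cna α * a ^ (-1 - α) * v := by ring
        _ ≤ 2 * Cna α * a ^ (-1 - α) * u := by
            have : (0:ℝ) ≤ 2 * Cna α * a ^ (-1 - α) := by positivity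
            exact mul_le_mul_of_nonneg_left hv.2 this
  have hχ0 : χ 0 = 0 := by simp [hχ]; ring
  rw [hχ0, sub_zero] at key
  calc |χ u| ≤ (2 * Cna α * a ^ (-1 - α) * u) * (u - 0) := key
    _ = 2 * Cna α * a ^ (-1 - α) * u ^ 2 := by ring

lemma even_bound {α x : ℝ} (hα0 : 0 < α) (hα2 : α < 2) (hx : 2 ≤ x) :
    |Gd α (x + 1) + Gd α (x - 1) - Gfun α (x + 1) + Gfun α (x - 1)|
      ≤ 2 * Cna α * (x - 1) ^ (-1 - α) := by
  have hc := Cna_pos hα0 hα2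
  have ha : (0:ℝ) < x - 1 := by linarith
  set φ : ℝ → ℝ := fun s => Gfun α (x + s) - Gfun α (x - s) - s * (Gd α (x + s) + Gd α (x - s))
    with hφ
  have key : |φ 1 - φ 0| ≤ (2 * Cna α * (x - 1) ^ (-1 - α)) * (1 - 0) := by
    refine diff_bound (by norm_num)
      (f' := fun s => -(s * (Gd2 α (x + s) - Gd2 α (x - s)))) ?_ ?_
    · intro s hs
      obtain ⟨hs0, hs1⟩ := hs
      have h1 : 0 < x + s := by linarith
      have h2 : 0 < x - s := by linarith
      have d1 : HasDerivAt (fun s : ℝ => Gfun α (x + 1 * s)) (Gd α (x + 1 * s) * 1) s :=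
        hasDerivAt_affine_comp (g' := Gd α) (hasDerivAt_Gfun hα0 hα2 (by linarith))
      have d2 : HasDerivAt (fun s : ℝ => Gfun α (x + (-1) * s)) (Gd α (x + (-1) * s) * (-1)) s :=
        hasDerivAt_affine_comp (g' := Gd α) (hasDerivAt_Gfun hα0 hα2 (by linarith))
      have d3 : HasDerivAt (fun s : ℝ => Gd α (x + 1 * s)) (Gd2 α (x + 1 * s) * 1) s :=
        hasDerivAt_affine_comp (g' := Gd2 α) (hasDerivAt_Gd hα0 hα2 (by linarith))
      have d4 : HasDerivAt (fun s : ℝ => Gd α (x + (-1) * s)) (Gd2 α (x + (-1) * s) * (-1)) s :=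
        hasDerivAt_affine_comp (g' := Gd2 α) (hasDerivAt_Gd hα0 hα2 (by linarith))
      have prod := (hasDerivAt_id s).mul (d3.add d4)
      have total := (d1.sub d2).sub prod
      simp only [hφ, id_eq, one_mul, neg_one_mul, mul_one, mul_neg, sub_eq_add_neg] at total ⊢
      refine total.congr_deriv ?_
      simp only [Pi.add_apply]
      ring
    · intro s hs
      obtain ⟨hs0, hs1⟩ := hs
      have hd := Gd2_diff hα0 hα2 ha (by linarith : x - 1 ≤ x - s) (by linarith : x - s ≤ x + s)
      have habs : |(-(s * (Gd2 α (x + s) - Gd2 α (x - s))))| = s * |Gd2 α (x + s) - Gd2 α (x - s)| := by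
        rw [abs_neg, abs_mul, abs_of_nonneg hs0]
      rw [habs]
      have hnn : (0:ℝ) ≤ Cna α * (x - 1) ^ (-1 - α) := by positivity
      calc s * |Gd2 α (x + s) - Gd2 α (x - s)|
          ≤ 1 * (Cna α * (x - 1) ^ (-1 - α) * (x + s - (x - s))) := by
            apply mul_le_mul hs1 (hd.trans_eq rfl) (abs_nonneg _) (by norm_num)
        _ = 2 * (Cna α * (x - 1) ^ (-1 - α)) * s := by ring
        _ ≤ 2 * (Cna α * (x - 1) ^ (-1 - α)) * 1 := by
            exact mul_le_mul_of_nonneg_left hs1 (by positivity)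
        _ = 2 * Cna α * (x - 1) ^ (-1 - α) := by ring
  have hφ0 : φ 0 = 0 := by simp [hφ]
  have hφ1 : φ 1 = -(Gd α (x + 1) + Gd α (x - 1) - Gfun α (x + 1) + Gfun α (x - 1)) := by
    simp only [hφ]; ring
  rw [hφ0, sub_zero, hφ1, abs_neg] at key
  linarith [key]

noncomputable def Efun (α x : ℝ) : ℝ :=
  Gfun α (x + 2) - Gfun α x - 3 / 2 * Gd α x - 1 / 2 * Gd α (x + 2)

noncomputable def Kc (α : ℝ) : ℝ := Cna α / (2 - α) - Gd2 α 1

lemma odd_bound {α x : ℝ} (hα0 : 0 < α) (hα2 : α < 2) (hx : 3 ≤ x) :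
    |(-(Gd α (x + 2) + 6 * Gd α x + Gd α (x - 2)) / 2 + Gfun α (x + 2) - Gfun α (x - 2))|
      ≤ 16 * Cna α * (x - 2) ^ (-1 - α) := by
  have hc := Cna_pos hα0 hα2
  have ha : (0:ℝ) < x - 2 := by linarith
  set A : ℝ := Cna α * (x - 2) ^ (-1 - α) with hA
  have hAnn : 0 ≤ A := by positivity
  set ψ : ℝ → ℝ := fun s => Gfun α (x + 2 * s) - Gfun α (x - 2 * s)
    - s / 2 * (Gd α (x + 2 * s) + Gd α (x - 2 * s)) - 3 * s * Gd α x with hψ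
  have key : |ψ 1 - ψ 0| ≤ (16 * A) * (1 - 0) := by
    refine diff_bound (by norm_num)
      (f' := fun s => 3 / 2 * (Gd α (x + 2 * s) + Gd α (x - 2 * s) - 2 * Gd α x)
        - s * (Gd2 α (x + 2 * s) - Gd2 α (x - 2 * s))) ?_ ?_
    · intro s hs
      obtain ⟨hs0, hs1⟩ := hs
      have h1 : 0 < x + 2 * s := by linarith
      have h2 : 0 < x - 2 * s := by linarith
      have d1 : HasDerivAt (fun s : ℝ => Gfun α (x + 2 * s)) (Gd α (x + 2 * s) * 2) s :=
        hasDerivAt_affine_comp (g' := Gd α) (hasDerivAt_Gfun hα0 hα2 (by linarith))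
      have d2 : HasDerivAt (fun s : ℝ => Gfun α (x + (-2) * s)) (Gd α (x + (-2) * s) * (-2)) s :=
        hasDerivAt_affine_comp (g' := Gd α) (hasDerivAt_Gfun hα0 hα2 (by linarith))
      have d3 : HasDerivAt (fun s : ℝ => Gd α (x + 2 * s)) (Gd2 α (x + 2 * s) * 2) s :=
        hasDerivAt_affine_comp (g' := Gd2 α) (hasDerivAt_Gd hα0 hα2 (by linarith))
      have d4 : HasDerivAt (fun s : ℝ => Gd α (x + (-2) * s)) (Gd2 α (x + (-2) * s) * (-2)) s :=
        hasDerivAt_affine_comp (g' := Gd2 α) (hasDerivAt_Gd hα0 hα2 (by linarith))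
      have prod := ((hasDerivAt_id s).div_const 2).mul (d3.add d4)
      have lin3 : HasDerivAt (fun s : ℝ => 3 * s * Gd α x) (3 * 1 * Gd α x) s :=
        ((hasDerivAt_id s).const_mul 3).mul_const (Gd α x)
      have total := ((d1.sub d2).sub prod).sub lin3
      simp only [hψ, id_eq, one_mul, mul_one, neg_mul, mul_neg, sub_eq_add_neg] at total ⊢
      refine total.congr_deriv ?_
      simp only [Pi.add_apply]
      ring
    · intro s hs
      obtain ⟨hs0, hs1⟩ := hs
      have hsd := Gd_sdiff hα0 hα2 ha (by linarith : (0:ℝ) ≤ 2 * s)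
        (by linarith : x - 2 ≤ x - 2 * s)
      have hd := Gd2_diff hα0 hα2 ha (by linarith : x - 2 ≤ x - 2 * s)
        (by linarith : x - 2 * s ≤ x + 2 * s)
      have e1 : |3 / 2 * (Gd α (x + 2 * s) + Gd α (x - 2 * s) - 2 * Gd α x)| ≤ 12 * A := by
        rw [abs_mul, abs_of_nonneg (by norm_num : (0:ℝ) ≤ 3 / 2)]
        have : |Gd α (x + 2 * s) + Gd α (x - 2 * s) - 2 * Gd α x| ≤ 2 * A * (2 * s) ^ 2 := by
          have h' := hsd
          rw [show 2 * Cna α * (x - 2) ^ (-1 - α) = 2 * A by rw [hA]; ring] at h'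
          exact h'
        have h4 : (2 * s) ^ 2 ≤ 4 := by nlinarith
        nlinarith [abs_nonneg (Gd α (x + 2 * s) + Gd α (x - 2 * s) - 2 * Gd α x)]
      have e2 : |s * (Gd2 α (x + 2 * s) - Gd2 α (x - 2 * s))| ≤ 4 * A := by
        rw [abs_mul, abs_of_nonneg hs0]
        have : |Gd2 α (x + 2 * s) - Gd2 α (x - 2 * s)| ≤ A * (x + 2 * s - (x - 2 * s)) := hd
        nlinarith [abs_nonneg (Gd2 α (x + 2 * s) - Gd2 α (x - 2 * s))]
      calc |3 / 2 * (Gd α (x + 2 * s) + Gd α (x - 2 * s) - 2 * Gd α x)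
            - s * (Gd2 α (x + 2 * s) - Gd2 α (x - 2 * s))|
          ≤ |3 / 2 * (Gd α (x + 2 * s) + Gd α (x - 2 * s) - 2 * Gd α x)|
            + |s * (Gd2 α (x + 2 * s) - Gd2 α (x - 2 * s))| := abs_sub _ _
        _ ≤ 12 * A + 4 * A := add_le_add e1 e2
        _ = 16 * A := by ring
  have hψ0 : ψ 0 = 0 := by simp [hψ]
  have hψ1 : ψ 1 = -(Gd α (x + 2) + 6 * Gd α x + Gd α (x - 2)) / 2 + Gfun α (x + 2) - Gfun α (x - 2) := by
    simp only [hψ]; norm_num; ring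
  rw [hψ0, sub_zero, hψ1] at key
  linarith [key]

lemma E_bound {α x : ℝ} (hα0 : 0 < α) (hα2 : α < 2) (hx : 1 ≤ x) :
    |Efun α x| ≤ 4 * (Cna α * x ^ (-α) / α) := by
  have hc := Cna_pos hα0 hα2
  have hx0 : (0:ℝ) < x := by linarith
  set B : ℝ := Cna α * x ^ (-α) / α with hB
  have hBnn : 0 ≤ B := by positivity
  set η : ℝ → ℝ := fun s => Gfun α (x + 2 * s) - Gfun α x - 3 * s / 2 * Gd α x
    - s / 2 * Gd α (x + 2 * s) with hη
  have key : |η 1 - η 0| ≤ (4 * B) * (1 - 0) := by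
    refine diff_bound (by norm_num)
      (f' := fun s => 3 / 2 * (Gd α (x + 2 * s) - Gd α x) - s * Gd2 α (x + 2 * s)) ?_ ?_
    · intro s hs
      obtain ⟨hs0, hs1⟩ := hs
      have h1 : 0 < x + 2 * s := by linarith
      have d1 : HasDerivAt (fun s : ℝ => Gfun α (x + 2 * s)) (Gd α (x + 2 * s) * 2) s :=
        hasDerivAt_affine_comp (g' := Gd α) (hasDerivAt_Gfun hα0 hα2 (by linarith))
      have d3 : HasDerivAt (fun s : ℝ => Gd α (x + 2 * s)) (Gd2 α (x + 2 * s) * 2) s :=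
        hasDerivAt_affine_comp (g' := Gd2 α) (hasDerivAt_Gd hα0 hα2 (by linarith))
      have lin1 : HasDerivAt (fun s : ℝ => 3 * s / 2 * Gd α x) (3 * 1 / 2 * Gd α x) s :=
        (((hasDerivAt_id s).const_mul 3).div_const 2).mul_const (Gd α x)
      have prod := ((hasDerivAt_id s).div_const 2).mul d3
      have total := (((d1.sub_const (Gfun α x)).sub lin1)).sub prod
      simp only [hη, id_eq, one_mul, mul_one, sub_eq_add_neg] at total ⊢
      refine total.congr_deriv ?_
      ring
    · intro s hs
      obtain ⟨hs0, hs1⟩ := hs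
      have hd := Gd_diff hα0 hα2 hx0 (le_refl x) (by linarith : x ≤ x + 2 * s)
      have hb := Gd2_bound hα0 hα2 hx0 (by linarith : x ≤ x + 2 * s)
      have e1 : |3 / 2 * (Gd α (x + 2 * s) - Gd α x)| ≤ 3 * B := by
        rw [abs_mul, abs_of_nonneg (by norm_num : (0:ℝ) ≤ 3 / 2)]
        have : |Gd α (x + 2 * s) - Gd α x| ≤ B * (x + 2 * s - x) := hd
        nlinarith [abs_nonneg (Gd α (x + 2 * s) - Gd α x)]
      have e2 : |s * Gd2 α (x + 2 * s)| ≤ B := by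
        rw [abs_mul, abs_of_nonneg hs0]
        nlinarith [abs_nonneg (Gd2 α (x + 2 * s))]
      calc |3 / 2 * (Gd α (x + 2 * s) - Gd α x) - s * Gd2 α (x + 2 * s)|
          ≤ |3 / 2 * (Gd α (x + 2 * s) - Gd α x)| + |s * Gd2 α (x + 2 * s)| := abs_sub _ _
        _ ≤ 3 * B + B := add_le_add e1 e2
        _ = 4 * B := by ring
  have hη0 : η 0 = 0 := by simp [hη]
  have hη1 : η 1 = Efun α x := by
    simp only [hη, Efun]; norm_num
  rw [hη0, sub_zero, hη1] at key
  linarith [key]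

lemma wQ_neg (α h : ℝ) (j : ℤ) : wQ α h (-j) = wQ α h j := by
  simp [wQ, neg_eq_zero, Int.natAbs_neg]

lemma wQ_zero (α h : ℝ) : wQ α h ((0:ℕ) : ℤ) = 0 := by simp [wQ]

lemma wQ_one (α h : ℝ) : wQ α h ((1:ℕ) : ℤ) = h ^ (-α) * (Kc α + Efun α 1) := by
  simp only [wQ, Kc, Efun]
  norm_num
  exact Or.inl (by ring)

lemma wQ_pair (α h : ℝ) (m : ℕ) (hm : 1 ≤ m) :
    wQ α h ((2*m : ℕ) : ℤ) + wQ α h ((2*m + 1 : ℕ) : ℤ)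
      = h ^ (-α) * (Efun α (2*(m:ℝ)+1) - Efun α (2*(m:ℝ)-1)) := by
  simp only [wQ, Efun, Int.natAbs_natCast, Int.natCast_eq_zero]
  rw [if_neg (by omega), if_neg (by omega), if_pos (by omega),
    if_neg (by omega), if_neg (by omega), if_neg (by omega : ¬ (2*m+1) % 2 = 0)]
  push_cast
  ring_nf

lemma partial_sum (α h : ℝ) (M : ℕ) :
    ∑ n ∈ Finset.range (2*M+2), wQ α h (n:ℤ)
      = h ^ (-α) * (Kc α + Efun α (2*(M:ℝ)+1)) := by
  induction M with
  | zero =>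
    rw [show 2*0+2 = 2 by norm_num, Finset.sum_range_succ, Finset.sum_range_one]
    rw [show ((0:ℕ):ℤ) = ((0:ℕ):ℤ) from rfl]
    rw [wQ_zero α h, wQ_one α h]
    norm_num
  | succ M ih =>
    rw [show 2*(M+1)+2 = (2*M+2)+1+1 by ring, Finset.sum_range_succ, Finset.sum_range_succ, ih]
    have hp := wQ_pair α h (M+1) (by omega)
    rw [show (2*(M+1) : ℕ) = 2*M+2 by ring, show (2*M+2+1 : ℕ) = 2*M+3 by ring] at hp
    rw [add_assoc, hp]
    push_cast
    ring_nf

lemma Efun_tendsto {α : ℝ} (hα0 : 0 < α) (hα2 : α < 2) :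
    Tendsto (fun M : ℕ => Efun α (2*(M:ℝ)+1)) atTop (𝓝 0) := by
  apply squeeze_zero_norm
    (fun M => by
      simpa [Real.norm_eq_abs] using E_bound (x := 2*(M:ℝ)+1) hα0 hα2
        (by linarith [Nat.cast_nonneg (α := ℝ) M]))
  have h1 : Tendsto (fun M : ℕ => (2*(M:ℝ)+1)) atTop atTop := by
    apply tendsto_atTop_add_const_right
    exact (tendsto_natCast_atTop_atTop).const_mul_atTop (by norm_num)
  have h2 : Tendsto (fun M : ℕ => (2*(M:ℝ)+1) ^ (-α)) atTop (𝓝 0) :=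
    (tendsto_rpow_neg_atTop hα0).comp h1
  have h3 := h2.const_mul (4 * Cna α / α)
  rw [mul_zero] at h3
  refine h3.congr (fun M => ?_)
  ring

lemma rpow_shift_bound {α : ℝ} (hα0 : 0 < α) (hα2 : α < 2) {n : ℕ} (hn : 5 ≤ n)
    {d : ℝ} (hd1 : 1 ≤ d) (hd2 : d ≤ 2) :
    ((n:ℝ) - d) ^ (-1-α) ≤ 8 * (n:ℝ) ^ (-1-α) := by
  have hn5 : (5:ℝ) ≤ (n:ℝ) := by exact_mod_cast hn
  have h2 : (n:ℝ)/2 ≤ (n:ℝ) - d := by linarith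
  have h3 : (0:ℝ) < (n:ℝ)/2 := by linarith
  have key : ((n:ℝ)/2) ^ (-1-α) = (n:ℝ) ^ (-1-α) * ((2:ℝ) ^ (1+α)) := by
    rw [show ((n:ℝ)/2) = (n:ℝ) * (2:ℝ)⁻¹ by ring,
      Real.mul_rpow (by linarith) (by norm_num),
      Real.inv_rpow (by norm_num), ← Real.rpow_neg (by norm_num)]
    ring_nf
  have h8 : (2:ℝ) ^ (1+α) ≤ 8 := by
    have := Real.rpow_le_rpow_of_exponent_le (by norm_num : (1:ℝ) ≤ 2)
      (by linarith : 1 + α ≤ (3:ℝ))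
    have h23 : (2:ℝ) ^ (3:ℝ) = 8 := by
      rw [show (3:ℝ) = ((3:ℕ):ℝ) by norm_num, Real.rpow_natCast]; norm_num
    linarith
  calc ((n:ℝ) - d) ^ (-1-α) ≤ ((n:ℝ)/2) ^ (-1-α) :=
        Real.rpow_le_rpow_of_nonpos h3 h2 (by linarith)
    _ = (n:ℝ) ^ (-1-α) * ((2:ℝ) ^ (1+α)) := key
    _ ≤ (n:ℝ) ^ (-1-α) * 8 := by
        have : (0:ℝ) ≤ (n:ℝ) ^ (-1-α) := Real.rpow_nonneg (by linarith) _
        nlinarith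
    _ = 8 * (n:ℝ) ^ (-1-α) := by ring

lemma summable_nat {α h : ℝ} (hα0 : 0 < α) (hα2 : α < 2) (hh : 0 < h) :
    Summable (fun n : ℕ => wQ α h (n:ℤ)) := by
  have hc := Cna_pos hα0 hα2
  have hhp : (0:ℝ) < h ^ (-α) := Real.rpow_pos_of_pos hh _
  apply Summable.of_norm_bounded_eventually_nat
    (g := fun n => (128 * Cna α * h ^ (-α)) * (n:ℝ) ^ (-1-α))
    (((Real.summable_nat_rpow).2 (by linarith)).mul_left _)
  filter_upwards [eventually_ge_atTop 5] with n hn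
  have hne : ((n:ℕ):ℤ) ≠ 0 := Int.natCast_ne_zero.mpr (by omega)
  have hn2 : (2:ℝ) ≤ (n:ℝ) := by exact_mod_cast (by omega : 2 ≤ n)
  have hn3 : (3:ℝ) ≤ (n:ℝ) := by exact_mod_cast (by omega : 3 ≤ n)
  rw [Real.norm_eq_abs]
  rcases Nat.even_or_odd n with he | ho
  · have he2 : n % 2 = 0 := Nat.even_iff.mp he
    rw [wQ, if_neg hne, Int.natAbs_natCast, if_neg (by omega : ¬ n = 1),
      if_pos (by omega : n % 2 = 0)]
    rw [abs_mul, abs_mul, abs_of_nonneg (by norm_num : (0:ℝ) ≤ 2), abs_of_pos hhp]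
    have hb := even_bound (x := (n:ℝ)) hα0 hα2 hn2
    have hs := rpow_shift_bound hα0 hα2 hn (d := 1) (by norm_num) (by norm_num)
    calc 2 * h^(-α) * |Gd α ((n:ℝ)+1) + Gd α ((n:ℝ)-1) - Gfun α ((n:ℝ)+1) + Gfun α ((n:ℝ)-1)|
        ≤ 2 * h^(-α) * (2 * Cna α * ((n:ℝ)-1)^(-1-α)) := by
          apply mul_le_mul_of_nonneg_left hb (by positivity)
      _ ≤ 2 * h^(-α) * (2 * Cna α * (8 * (n:ℝ)^(-1-α))) := by
          refine mul_le_mul_of_nonneg_left ?_ (by positivity)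
          exact mul_le_mul_of_nonneg_left hs (by positivity)
      _ ≤ (128 * Cna α * h^(-α)) * (n:ℝ)^(-1-α) := by
          have h0 : (0:ℝ) ≤ (n:ℝ)^(-1-α) := Real.rpow_nonneg (by linarith) _
          nlinarith [mul_nonneg (mul_nonneg hc.le hhp.le) h0]
  · have ho2 : n % 2 = 1 := Nat.odd_iff.mp ho
    rw [wQ, if_neg hne, Int.natAbs_natCast, if_neg (by omega : ¬ n = 1),
      if_neg (by omega : ¬ n % 2 = 0)]
    rw [abs_mul, abs_of_pos hhp]
    have hb := odd_bound (x := (n:ℝ)) hα0 hα2 hn3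
    have hs := rpow_shift_bound hα0 hα2 hn (d := 2) (by norm_num) (by norm_num)
    calc h^(-α) * |(-(Gd α ((n:ℝ)+2) + 6 * Gd α (n:ℝ) + Gd α ((n:ℝ)-2)) / 2
          + Gfun α ((n:ℝ)+2) - Gfun α ((n:ℝ)-2))|
        ≤ h^(-α) * (16 * Cna α * ((n:ℝ)-2)^(-1-α)) := by
          apply mul_le_mul_of_nonneg_left hb (by positivity)
      _ ≤ h^(-α) * (16 * Cna α * (8 * (n:ℝ)^(-1-α))) := by
          refine mul_le_mul_of_nonneg_left ?_ (by positivity)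
          exact mul_le_mul_of_nonneg_left hs (by positivity)
      _ = (128 * Cna α * h^(-α)) * (n:ℝ)^(-1-α) := by ring

set_option maxHeartbeats 1000000 in
/-- The quadratic-interpolation weights are summable, with total sum
`Σ_{j≠0} w_j^Q = 2^α Γ((α+1)/2) / (√π Γ(2 − α/2)) · h^{−α}`. -/
theorem wQ_sum (α : ℝ) (hα0 : 0 < α) (hα2 : α < 2) (h : ℝ) (hh : 0 < h) :
    Summable (fun j : {j : ℤ // j ≠ 0} => wQ α h (j : ℤ)) ∧
    ∑' j : {j : ℤ // j ≠ 0}, wQ α h (j : ℤ)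
      = 2 ^ α * Real.Gamma ((α + 1) / 2) / (Real.sqrt Real.pi * Real.Gamma (2 - α / 2)) * h ^ (-α) := by
  have hc := Cna_pos hα0 hα2
  set F : ℤ → ℝ := fun j => wQ α h j with hF
  set a : ℝ := h ^ (-α) * Kc α with ha
  have hsummable : Summable (fun n : ℕ => F (n:ℤ)) := summable_nat hα0 hα2 hh
  have hs := hsummable.hasSum
  have htwo : Tendsto (fun M : ℕ => 2*M+2) atTop atTop := by
    apply tendsto_atTop_atTop.mpr
    intro b; exact ⟨b, fun x hx => by omega⟩
  have h2 : Tendsto (fun M : ℕ => ∑ n ∈ Finset.range (2*M+2), F (n:ℤ)) atTop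
      (𝓝 (∑' n : ℕ, F (n:ℤ))) := hs.tendsto_sum_nat.comp htwo
  have h3 : Tendsto (fun M : ℕ => ∑ n ∈ Finset.range (2*M+2), F (n:ℤ)) atTop (𝓝 a) := by
    have h5 := ((tendsto_const_nhds (x := Kc α) (f := atTop)).add
      (Efun_tendsto hα0 hα2)).const_mul (h ^ (-α))
    rw [add_zero] at h5
    exact Tendsto.congr (fun M => (partial_sum α h M).symm) h5
  have htsum : (∑' n : ℕ, F (n:ℤ)) = a := tendsto_nhds_unique h2 h3
  have hsnat : HasSum (fun n : ℕ => F (n:ℤ)) a := htsum ▸ hs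
  have hneg : HasSum (fun n : ℕ => F (-((n:ℤ)+1))) a := by
    have he : (fun n : ℕ => F (-((n:ℤ)+1))) = fun n : ℕ => F (((n+1:ℕ)):ℤ) := by
      funext n
      show wQ α h (-((n:ℤ)+1)) = wQ α h (((n+1:ℕ)):ℤ)
      rw [wQ_neg]
      norm_num
    rw [he]
    have h5 : HasSum (fun n : ℕ => F (((n+1:ℕ)):ℤ)) (a - ∑ i ∈ Finset.range 1, F (i:ℤ)) :=
      (hasSum_nat_add_iff' 1).2 hsnat
    have h0 : F 0 = 0 := by simp [hF, wQ]
    simpa [Finset.sum_range_one, h0] using h5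
  have hint : HasSum F (a + a) := HasSum.of_nat_of_neg_add_one hsnat hneg
  have hind : Set.indicator {j : ℤ | j ≠ 0} F = F := by
    funext j
    by_cases hj : j = 0
    · subst hj
      simp only [Set.indicator, Set.mem_setOf_eq, ne_eq, not_true_eq_false, if_false]
      show (0:ℝ) = wQ α h 0
      simp [wQ]
    · simp [Set.indicator, hj]
  have hsub : HasSum (fun j : ↥{j : ℤ | j ≠ 0} => F j) (a + a) :=
    (hasSum_subtype_iff_indicator (s := {j : ℤ | j ≠ 0}) (f := F)).2 (by rw [hind]; exact hint)
  refine ⟨hsub.summable, ?_⟩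
  rw [show (∑' j : {j : ℤ // j ≠ 0}, wQ α h (j:ℤ)) = a + a from hsub.tsum_eq]
  have h1pow : (1:ℝ) ^ (-α) = 1 := Real.one_rpow _
  have hKc : Kc α = Cna α / (2 - α) + Cna α / α := by
    rw [Kc, Gd2, h1pow]; ring
  have hΓb : Real.Gamma (2 - α/2) = ((2-α)/2) * Real.Gamma ((2-α)/2) := by
    rw [show (2 - α/2) = (2-α)/2 + 1 by ring,
      Real.Gamma_add_one (ne_of_gt (by linarith : (0:ℝ) < (2-α)/2))]
  have h2a : (2:ℝ) ^ (α-1) = 2 ^ α / 2 := by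
    rw [Real.rpow_sub (by norm_num : (0:ℝ) < 2), Real.rpow_one]
  rw [ha, hKc, hΓb]
  simp only [Cna]
  rw [h2a]
  have hπ : Real.sqrt Real.pi ≠ 0 := ne_of_gt (Real.sqrt_pos.2 Real.pi_pos)
  have hΓb0 : Real.Gamma ((2-α)/2) ≠ 0 := ne_of_gt (Real.Gamma_pos_of_pos (by linarith))
  have hα1 : α ≠ 0 := ne_of_gt hα0
  have h2α : (2:ℝ) - α ≠ 0 := ne_of_gt (by linarith)
  field_simp
  ring
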